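/- Let p ≥ 1 and let A be a p×p real matrix with A i j ≠ 0 implying i < j (the weighted adjacency matrix of a DAG whose vertices are listed in a topological order), and let G_M be the moral graph of A. Then G_M is acyclic (a tree or forest) if and only if the maximum in-degree of the DAG is at most one, i.e., for every vertex j and all vertices i, i′, if A i j ≠ 0 and A i′ j ≠ 0 then i = i′. -/

import Mathlib

open Matrix

/-- The moral graph of a `p × p` matrix `A`: distinct vertices `i` and `j` are adjacent iff
`A i j ≠ 0`, or `A j i ≠ 0`, or they share a common child `k` with `A i k ≠ 0` and `A j k ≠ 0`. -/
def moralGraph {p : ℕ} (A : Matrix (Fin p) (Fin p) ℝ) : SimpleGraph (Fin p) :=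
  SimpleGraph.fromRel (fun i j => A i j ≠ 0 ∨ ∃ k, A i k ≠ 0 ∧ A j k ≠ 0)

/-- The moral graph of a DAG (with vertices in topological order) is acyclic (a tree or
forest) if and only if every vertex of the DAG has at most one parent. -/
theorem moralGraph_isAcyclic_iff_max_indegree_le_one
    {p : ℕ} (hp : 1 ≤ p) (A : Matrix (Fin p) (Fin p) ℝ)
    (htopo : ∀ i j, A i j ≠ 0 → i < j) :
    (moralGraph A).IsAcyclic ↔
      ∀ j i i' : Fin p, A i j ≠ 0 → A i' j ≠ 0 → i = i' := by
  constructor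
  · -- acyclic → at most one parent
    intro hac j i i' hi hi'
    by_contra hne
    have hij : i < j := htopo _ _ hi
    have hij' : i' < j := htopo _ _ hi'
    have h1 : (moralGraph A).Adj i j := by
      simp only [moralGraph, SimpleGraph.fromRel_adj]
      exact ⟨hij.ne, Or.inl (Or.inl hi)⟩
    have h2 : (moralGraph A).Adj j i' := by
      simp only [moralGraph, SimpleGraph.fromRel_adj]
      exact ⟨hij'.ne', Or.inr (Or.inl hi')⟩
    have h3 : (moralGraph A).Adj i' i := by
      simp only [moralGraph, SimpleGraph.fromRel_adj]
      exact ⟨Ne.symm hne, Or.inl (Or.inr ⟨j, hi', hi⟩)⟩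
    have hcyc : (SimpleGraph.Walk.cons h1 (SimpleGraph.Walk.cons h2
        (SimpleGraph.Walk.cons h3 SimpleGraph.Walk.nil))).IsCycle := by
      have e1 : i ≠ j := hij.ne
      have e2 : j ≠ i' := hij'.ne'
      have e3 : i' ≠ i := Ne.symm hne
      simp [SimpleGraph.Walk.isCycle_def, SimpleGraph.Walk.isTrail_def,
        Sym2.eq, Sym2.rel_iff', List.Nodup]
      aesop
    exact hac _ hcyc
  · -- at most one parent → acyclic
    intro H
    have hadj : ∀ i j : Fin p, (moralGraph A).Adj i j ↔ i ≠ j ∧ (A i j ≠ 0 ∨ A j i ≠ 0) := by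
      intro i j
      simp only [moralGraph, SimpleGraph.fromRel_adj]
      constructor
      · rintro ⟨hne, h | h⟩
        · rcases h with h | ⟨k, hk1, hk2⟩
          · exact ⟨hne, Or.inl h⟩
          · exact absurd (H k i j hk1 hk2) hne
        · rcases h with h | ⟨k, hk1, hk2⟩
          · exact ⟨hne, Or.inr h⟩
          · exact absurd (H k j i hk1 hk2) (Ne.symm hne)
      · rintro ⟨hne, h | h⟩
        · exact ⟨hne, Or.inl (Or.inl h)⟩
        · exact ⟨hne, Or.inr (Or.inl h)⟩
    -- adjacency with i < j means A i j ≠ 0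
    have hedge : ∀ i j : Fin p, (moralGraph A).Adj i j → i < j → A i j ≠ 0 := by
      intro i j h hij
      rcases (hadj i j).mp h with ⟨-, h | h⟩
      · exact h
      · exact absurd (htopo _ _ h) (lt_asymm hij)
    intro v c hc
    -- maximal vertex on the cycle
    have hsne : c.support.toFinset.Nonempty := ⟨v, by simp⟩
    set m := c.support.toFinset.max' hsne with hm_def
    have hm_mem : m ∈ c.support := by
      have := c.support.toFinset.max'_mem hsne
      simpa using this
    have hm_max : ∀ a, a ∈ c.support → a ≤ m := by
      intro a ha
      exact c.support.toFinset.le_max' a (by simpa using ha)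
    set c' := c.rotate m hm_mem with hc'_def
    have hc'cyc : c'.IsCycle := hc.rotate hm_mem
    have hc'nn : ¬ c'.Nil := hc'cyc.not_nil
    obtain ⟨x, hmx, q, hq⟩ := SimpleGraph.Walk.not_nil_iff.mp hc'nn
    rw [hq] at hc'cyc
    have hcons := (SimpleGraph.Walk.cons_isCycle_iff q hmx).mp hc'cyc
    -- q is nonempty since the cycle has length ≥ 3
    have hql : 2 ≤ q.length := by
      have h3 := hc'cyc.three_le_length
      simp only [SimpleGraph.Walk.length_cons] at h3
      omega
    have hqd : q.darts ≠ [] := by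
      intro h
      have := SimpleGraph.Walk.length_darts q
      rw [h] at this
      simp at this
      omega
    set d := q.darts.getLast hqd with hd_def
    have hdmem : d ∈ q.darts := List.getLast_mem hqd
    have hdsnd : d.snd = m := by rw [hd_def, SimpleGraph.Walk.getLast_darts_eq_lastDart]; rfl
    set y := d.fst with hy_def
    have hym : (moralGraph A).Adj y m := hdsnd ▸ d.adj
    -- y ≠ x, else edge s(m,x) ∈ q.edges
    have hyx : y ≠ x := by
      intro h
      apply hcons.2
      have h2 : d.edge ∈ q.edges := List.mem_map_of_mem hdmem
      have h3 : d.edge = s(y, m) := by rw [SimpleGraph.Dart.edge, ← hdsnd, hy_def]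
      rw [h3, h, Sym2.eq_swap] at h2
      exact h2
    -- x, y are in c.support
    have hrot := SimpleGraph.Walk.support_rotate c m hm_mem
    have htail : (c.rotate m hm_mem).support.tail = q.support := by
      rw [← hc'_def, hq]
      simp
    have hx_mem : x ∈ c.support := by
      have : x ∈ q.support := q.start_mem_support
      rw [← htail] at this
      exact List.mem_of_mem_tail (hrot.mem_iff.mp this)
    have hy_mem : y ∈ c.support := by
      have : y ∈ q.support := SimpleGraph.Walk.dart_fst_mem_support_of_mem_darts q hdmem
      rw [← htail] at this
      exact List.mem_of_mem_tail (hrot.mem_iff.mp this)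
    have hxm : x < m := lt_of_le_of_ne (hm_max x hx_mem) (hmx.ne')
    have hym' : y < m := lt_of_le_of_ne (hm_max y hy_mem) ((hym.ne))
    have hAx : A x m ≠ 0 := hedge x m hmx.symm hxm
    have hAy : A y m ≠ 0 := hedge y m hym hym'
    exact hyx (H m y x hAy hAx)
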